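/- Let β̂ minimize the Lasso objective F(β) = (1/2)Σ_{i=1}^n (y_i − x_i'β)² + λ‖β‖₁, let J₀ = {j : β̂_j ≠ 0}, and let v = Σ_{i=1}^n (y_i − x_i'β̂)x_i be the dual vector. Assume max_{j ∉ J₀} |v_j| < λ and that Σ̂_{J₀} is invertible. Define η(0) = n^{-1}Σ̂_{J₀}^{-1}x_{n+1,J₀} / (1 + n^{-1}x_{n+1,J₀}'Σ̂_{J₀}^{-1}x_{n+1,J₀}), γ(0) = (x_{n+1,J₀^c} − Σ̂_{J₀^c,J₀}Σ̂_{J₀}^{-1}x_{n+1,J₀}) / (1 + n^{-1}x_{n+1,J₀}'Σ̂_{J₀}^{-1}x_{n+1,J₀}), and t₁ = min_{j∈J₀}(−β̂_j/η_j(0))₊₊ ∧ min_{j∈J₀^c}((sign(γ_j(0))λ − v_j)/γ_j(0))₊₊, where (z)₊₊ equals z if z > 0 and +∞ if z ≤ 0, with the conventions 0/0 = 0 and z/0 = sign(z)·∞ for z ≠ 0. Then for every t ∈ [0, t₁], the vector β(t) ∈ ℝ^p defined by β(t)_{J₀} = β̂_{J₀} + t·η(0) and β(t)_j = 0 for j ∉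 J₀ is a global minimizer of the augmented objective F(β) + (1/2)(x_{n+1}'β̂ + t − x_{n+1}'β)². -/

import Mathlib

open scoped BigOperators Matrix

noncomputable section

/-- Euclidean inner product on `Fin p → ℝ`. -/
def dotp {p : ℕ} (a b : Fin p → ℝ) : ℝ := ∑ j, a j * b j

/-- The Lasso objective `F(β) = (1/2)∑ᵢ (yᵢ − xᵢ'β)² + λ‖β‖₁`. -/
def lassoObj {n p : ℕ} (x : Fin n → Fin p → ℝ) (y : Fin n → ℝ) (lam : ℝ)
    (β : Fin p → ℝ) : ℝ :=
  (1 / 2) * ∑ i, (y i - dotp (x i) β) ^ 2 + lam * ∑ j, |β j|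

/-- The augmented Lasso objective with `(x_{n+1}, ynew)` added as the `(n+1)`-th sample. -/
def augObj {n p : ℕ} (x : Fin n → Fin p → ℝ) (y : Fin n → ℝ) (xnew : Fin p → ℝ)
    (lam : ℝ) (ynew : ℝ) (β : Fin p → ℝ) : ℝ :=
  lassoObj x y lam β + (1 / 2) * (ynew - dotp xnew β) ^ 2

/-- The submatrix `Σ̂_J` of the sample covariance matrix `Σ̂ = n⁻¹∑ᵢ xᵢxᵢ'`. -/
def gramJ {n p : ℕ} (x : Fin n → Fin p → ℝ) (J : Finset (Fin p)) : Matrix ↥J ↥J ℝ :=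
  Matrix.of fun a b => (1 / (n : ℝ)) * ∑ i, x i a.1 * x i b.1

/-- The subvector `u_J` of `u` with coordinates in `J`. -/
def subv {p : ℕ} (u : Fin p → ℝ) (J : Finset (Fin p)) : ↥J → ℝ := fun a => u a.1

/-- `Σ̂_J⁻¹ x_{n+1,J}`. -/
def invPart {n p : ℕ} (x : Fin n → Fin p → ℝ) (J : Finset (Fin p)) (xnew : Fin p → ℝ) :
    ↥J → ℝ :=
  (gramJ x J)⁻¹ *ᵥ subv xnew J

/-- The denominator `1 + n⁻¹ x_{n+1,J}'Σ̂_J⁻¹x_{n+1,J}`. -/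
def denomC {n p : ℕ} (x : Fin n → Fin p → ℝ) (J : Finset (Fin p)) (xnew : Fin p → ℝ) : ℝ :=
  1 + (1 / (n : ℝ)) * (subv xnew J ⬝ᵥ invPart x J xnew)

/-- The slope vector `η = n⁻¹Σ̂_J⁻¹x_{n+1,J} / (1 + n⁻¹x_{n+1,J}'Σ̂_J⁻¹x_{n+1,J})`,
extended by `0` off `J`. -/
def etaV {n p : ℕ} (x : Fin n → Fin p → ℝ) (J : Finset (Fin p)) (xnew : Fin p → ℝ) :
    Fin p → ℝ := fun j =>
  if h : j ∈ J then (1 / (n : ℝ)) * invPart x J xnew ⟨j, h⟩ / denomC x J xnew else 0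

/-- The dual slope vector
`γ = (x_{n+1,J^c} − Σ̂_{J^c,J}Σ̂_J⁻¹x_{n+1,J}) / (1 + n⁻¹x_{n+1,J}'Σ̂_J⁻¹x_{n+1,J})`
(only its coordinates off `J` are used). -/
def gammaV {n p : ℕ} (x : Fin n → Fin p → ℝ) (J : Finset (Fin p)) (xnew : Fin p → ℝ) :
    Fin p → ℝ := fun j =>
  (xnew j - ∑ a : ↥J, ((1 / (n : ℝ)) * ∑ i, x i j * x i a.1) * invPart x J xnew a) /
    denomC x J xnew

/-- `rpp a b` is `(a/b)₊₊ ∈ EReal`, the ratio `a/b` computed with the conventions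
`0/0 = 0`, `z/0 = sign(z)·∞`, and then `(z)₊₊ = z` if `z > 0`, `(z)₊₊ = +∞` if `z ≤ 0`.
(When `b = 0` the result is always `+∞`, matching the conventions.) -/
def rpp (a b : ℝ) : EReal := if b ≠ 0 ∧ 0 < a / b then ((a / b : ℝ) : EReal) else ⊤

/-- The first point of change
`t₁ = min_{j∈J}(−β̂_j/η_j)₊₊ ∧ min_{j∈J^c}((sign(γ_j)λ − v_j)/γ_j)₊₊`. -/
def tOne {n p : ℕ} (x : Fin n → Fin p → ℝ) (J : Finset (Fin p)) (xnew : Fin p → ℝ)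
    (βhat v : Fin p → ℝ) (lam : ℝ) : EReal :=
  (J.inf fun j => rpp (-(βhat j)) (etaV x J xnew j)) ⊓
    (Jᶜ.inf fun j => rpp (Real.sign (gammaV x J xnew j) * lam - v j) (gammaV x J xnew j))

/-- The homotopy solution `β(t)`: `β(t)_J = β̂_J + t·η`, `β(t)_{J^c} = 0`. -/
def betaT {n p : ℕ} (x : Fin n → Fin p → ℝ) (J : Finset (Fin p)) (xnew : Fin p → ℝ)
    (βhat : Fin p → ℝ) (t : ℝ) : Fin p → ℝ := fun j =>
  if j ∈ J then βhat j + t * etaV x J xnew j else 0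

/- ---------- auxiliary lemmas ---------- -/

lemma abs_add_small {b s : ℝ} (hb : b ≠ 0) (hs : |s| < |b|) :
    |b + s| = |b| + s * Real.sign b := by
  rcases lt_or_gt_of_ne hb with h | h
  · rw [Real.sign_of_neg h, abs_of_neg h] at *
    rw [abs_of_neg (by cases abs_cases s with
      | inl h' => linarith [h'.1]
      | inr h' => linarith [h'.1])]
    ring
  · rw [Real.sign_of_pos h, abs_of_pos h] at *
    rw [abs_of_pos (by cases abs_cases s with
      | inl h' => linarith [h'.1]
      | inr h' => linarith [h'.1])]
    ring

lemma dotp_update {p : ℕ} (a b : Fin p → ℝ) (j : Fin p) (c : ℝ) :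
    dotp a (Function.update b j c) = dotp a b + a j * (c - b j) := by
  unfold dotp
  have h1 : ∑ k, a k * Function.update b j c k - ∑ k, a k * b k
      = ∑ k, (a k * Function.update b j c k - a k * b k) := by
    rw [Finset.sum_sub_distrib]
  have h2 : ∑ k, (a k * Function.update b j c k - a k * b k) = a j * (c - b j) := by
    rw [Finset.sum_eq_single j]
    · rw [Function.update_self]; ring
    · intro k _ hk; rw [Function.update_of_ne hk]; ring
    · intro h; exact absurd (Finset.mem_univ j) h
  linarith [h1, h2]

/-- KKT condition of the Lasso on the support. -/
lemma lasso_kkt {n p : ℕ} (x : Fin n → Fin p → ℝ) (y : Fin n → ℝ) (lam : ℝ)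
    (βhat : Fin p → ℝ)
    (hmin : ∀ β, lassoObj x y lam βhat ≤ lassoObj x y lam β)
    (v : Fin p → ℝ) (hv : ∀ j, ∑ i, (y i - dotp (x i) βhat) * x i j = v j)
    (j : Fin p) (hb : βhat j ≠ 0) : v j = lam * Real.sign (βhat j) := by
  by_contra hne
  set d : ℝ := lam * Real.sign (βhat j) - v j with hd
  have hdne : d ≠ 0 := fun h => hne (by rw [hd] at h; linarith)
  set A : ℝ := ∑ i, (x i j) ^ 2 with hA
  have hA0 : 0 ≤ A := Finset.sum_nonneg fun i _ => sq_nonneg _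
  set ε : ℝ := min (|βhat j| / (2 * |d|)) (1 / (A + 1)) with hε
  have hd0 : 0 < |d| := abs_pos.mpr hdne
  have hε0 : 0 < ε := lt_min (by positivity) (by positivity)
  set st : ℝ := -ε * d with hst
  have hstabs : |st| < |βhat j| := by
    have h0 : |st| = ε * |d| := by rw [hst, abs_mul, abs_neg, abs_of_pos hε0]
    rw [h0]
    have h1 : ε ≤ |βhat j| / (2 * |d|) := min_le_left _ _
    have hb0 : 0 < |βhat j| := abs_pos.mpr hb
    calc ε * |d| ≤ (|βhat j| / (2 * |d|)) * |d| :=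
          mul_le_mul_of_nonneg_right h1 (le_of_lt hd0)
      _ = |βhat j| / 2 := by field_simp
      _ < |βhat j| := by linarith
  have hεA : ε * A ≤ 1 := by
    have h2 : ε ≤ 1 / (A + 1) := min_le_right _ _
    have h4 : ε * A ≤ (1 / (A + 1)) * A := mul_le_mul_of_nonneg_right h2 hA0
    have h3 : (1 / (A + 1)) * A ≤ 1 := by
      rw [div_mul_eq_mul_div, div_le_one (by linarith)]; linarith
    linarith
  set β' : Fin p → ℝ := Function.update βhat j (βhat j + st) with hβ'
  have key := hmin β'
  have habs : ∑ k, |β' k| = (∑ k, |βhat k|) + st * Real.sign (βhat j) := by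
    have h5 : ∑ k, (|β' k| - |βhat k|) = st * Real.sign (βhat j) := by
      rw [Finset.sum_eq_single j]
      · rw [hβ', Function.update_self, abs_add_small hb hstabs]; ring
      · intro k _ hk; rw [hβ', Function.update_of_ne hk]; ring
      · intro h; exact absurd (Finset.mem_univ j) h
    rw [Finset.sum_sub_distrib] at h5
    linarith
  have hdp : ∀ i, dotp (x i) β' = dotp (x i) βhat + st * x i j := by
    intro i; rw [hβ', dotp_update]; ring
  have hsq : ∑ i, (y i - dotp (x i) β') ^ 2
      = (∑ i, (y i - dotp (x i) βhat) ^ 2) - 2 * st * v j + st ^ 2 * A := by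
    have h6 : ∀ i, (y i - dotp (x i) β') ^ 2
        = (y i - dotp (x i) βhat) ^ 2 - 2 * st * ((y i - dotp (x i) βhat) * x i j)
          + st ^ 2 * (x i j) ^ 2 := by
      intro i; rw [hdp i]; ring
    rw [Finset.sum_congr rfl fun i _ => h6 i]
    rw [Finset.sum_add_distrib, Finset.sum_sub_distrib, ← Finset.mul_sum, ← Finset.mul_sum,
      hv j]
  have hobj : lassoObj x y lam β' = lassoObj x y lam βhat
      - st * v j + st ^ 2 * A / 2 + lam * (st * Real.sign (βhat j)) := by
    unfold lassoObj
    rw [hsq, habs]; ring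
  rw [hobj] at key
  have key2 : 0 ≤ - st * v j + st ^ 2 * A / 2 + lam * (st * Real.sign (βhat j)) := by
    linarith
  have hsd : - st * v j + lam * (st * Real.sign (βhat j)) = st * d := by
    rw [hd]; ring
  have key3 : 0 ≤ st * d + st ^ 2 * A / 2 := by linarith [key2, hsd]
  have hdsq : 0 < d ^ 2 := by positivity
  have e1 : st * d + st ^ 2 * A / 2 = ε * d ^ 2 * (ε * A / 2 - 1) := by rw [hst]; ring
  have e3 : ε * d ^ 2 * (ε * A / 2 - 1) ≤ ε * d ^ 2 * (-(1/2)) :=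
    mul_le_mul_of_nonneg_left (by linarith) (by positivity)
  have e4 : ε * d ^ 2 * (-(1/2)) < 0 := by nlinarith [mul_pos hε0 hdsq]
  linarith

lemma gram_mulVec_invPart {n p : ℕ} (x : Fin n → Fin p → ℝ) (J : Finset (Fin p))
    (xnew : Fin p → ℝ) (hinv : IsUnit (gramJ x J)) :
    gramJ x J *ᵥ invPart x J xnew = subv xnew J := by
  unfold invPart
  rw [Matrix.mulVec_mulVec, Matrix.mul_nonsing_inv _ ((Matrix.isUnit_iff_isUnit_det _).mp hinv),
    Matrix.one_mulVec]

lemma gram_quad {n p : ℕ} (x : Fin n → Fin p → ℝ) (J : Finset (Fin p)) (u : ↥J → ℝ) :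
    (gramJ x J *ᵥ u) ⬝ᵥ u = (1/(n:ℝ)) * ∑ i, (∑ a : ↥J, x i a.1 * u a)^2 := by
  simp only [dotProduct, Matrix.mulVec, gramJ, Matrix.of_apply, Finset.sum_mul,
    Finset.mul_sum, sq]
  refine ((Finset.sum_congr rfl fun a _ => Finset.sum_comm).trans ?_).trans
    (Finset.sum_congr rfl fun i _ => Finset.sum_comm).symm
  rw [Finset.sum_comm]
  exact Finset.sum_congr rfl fun i _ => Finset.sum_congr rfl fun a _ =>
    Finset.sum_congr rfl fun b _ => by ring

lemma rpp_le {a b t : ℝ} (h : (t : EReal) ≤ rpp a b) (hb : b ≠ 0) (hab : 0 < a / b) :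
    t ≤ a / b := by
  unfold rpp at h
  rw [if_pos ⟨hb, hab⟩] at h
  exact_mod_cast h

theorem lasso_homotopy_initial_piece {n p : ℕ} (x : Fin n → Fin p → ℝ) (y : Fin n → ℝ)
    (xnew : Fin p → ℝ) (lam : ℝ) (hlam : 0 < lam) (βhat : Fin p → ℝ)
    (hmin : ∀ β, lassoObj x y lam βhat ≤ lassoObj x y lam β)
    (J₀ : Finset (Fin p)) (hJ₀ : ∀ j, j ∈ J₀ ↔ βhat j ≠ 0)
    (v : Fin p → ℝ) (hv : ∀ j, ∑ i, (y i - dotp (x i) βhat) * x i j = v j)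
    (hstrict : ∀ j ∉ J₀, |v j| < lam)
    (hinv : IsUnit (gramJ x J₀)) :
    ∀ t : ℝ, 0 ≤ t → (t : EReal) ≤ tOne x J₀ xnew βhat v lam →
      ∀ β, augObj x y xnew lam (dotp xnew βhat + t) (betaT x J₀ xnew βhat t) ≤
        augObj x y xnew lam (dotp xnew βhat + t) β := by
  intro t ht0 ht1 β
  classical
  set u : ↥J₀ → ℝ := invPart x J₀ xnew with hu
  set c : ℝ := denomC x J₀ xnew with hcdef
  set η : Fin p → ℝ := etaV x J₀ xnew with hηdef
  set βt : Fin p → ℝ := betaT x J₀ xnew βhat t with hβtdef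
  set ynew : ℝ := dotp xnew βhat + t with hynewdef
  -- basic facts about c
  have hMu : gramJ x J₀ *ᵥ u = subv xnew J₀ := gram_mulVec_invPart x J₀ xnew hinv
  have hquad : 0 ≤ subv xnew J₀ ⬝ᵥ u := by
    rw [← hMu, gram_quad]
    have hn : (0:ℝ) ≤ 1/(n:ℝ) := by positivity
    exact mul_nonneg hn (Finset.sum_nonneg fun i _ => sq_nonneg _)
  have hc1 : 1 ≤ c := by
    rw [hcdef]
    unfold denomC
    have hn : (0:ℝ) ≤ 1/(n:ℝ) := by positivity
    nlinarith [mul_nonneg hn hquad]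
  have hcpos : 0 < c := by linarith
  have hc0 : c ≠ 0 := ne_of_gt hcpos
  -- S j = xnew j on J₀
  have hS : ∀ j (hj : j ∈ J₀),
      (∑ a : ↥J₀, ((1 / (n : ℝ)) * ∑ i, x i j * x i a.1) * u a) = xnew j := by
    intro j hj
    have h0 := congrFun hMu ⟨j, hj⟩
    simpa [Matrix.mulVec, dotProduct, gramJ, subv] using h0
  have hγ0 : ∀ j ∈ J₀, gammaV x J₀ xnew j = 0 := by
    intro j hj
    unfold gammaV
    rw [← hu, ← hcdef, hS j hj]
    simp
  -- βt as a global formula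
  have hβteq : ∀ j, βt j = βhat j + t * η j := by
    intro j
    rw [hβtdef, hηdef]
    unfold betaT
    by_cases hj : j ∈ J₀
    · rw [if_pos hj]
    · rw [if_neg hj]
      have hb0 : βhat j = 0 := by
        by_contra h; exact hj ((hJ₀ j).mpr h)
      have he0 : etaV x J₀ xnew j = 0 := by unfold etaV; rw [dif_neg hj]
      rw [hb0, he0]; ring
  -- dot products with η
  have hdotη : ∀ a : Fin p → ℝ,
      dotp a η = ((1 / (n : ℝ)) * ∑ b : ↥J₀, a b.1 * u b) / c := by
    intro a
    rw [hηdef]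
    unfold dotp
    rw [← Finset.sum_subset (Finset.subset_univ J₀)
      (fun j _ hj => by unfold etaV; rw [dif_neg hj, mul_zero])]
    rw [← Finset.sum_coe_sort J₀ (fun j => a j * etaV x J₀ xnew j)]
    have h1 : ∀ b : ↥J₀, a b.1 * etaV x J₀ xnew b.1
        = a b.1 * ((1 / (n : ℝ)) * u b / c) := by
      intro b
      unfold etaV
      rw [dif_pos b.2, ← hu, ← hcdef]
    rw [Finset.sum_congr rfl fun b _ => h1 b]
    rw [Finset.mul_sum, Finset.sum_div]
    exact Finset.sum_congr rfl fun b _ => by ring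
  have hxnewη : dotp xnew η = (c - 1) / c := by
    rw [hdotη xnew]
    have h2 : ∑ b : ↥J₀, xnew b.1 * u b = subv xnew J₀ ⬝ᵥ u := rfl
    rw [h2]
    have h3 : c - 1 = (1 / (n : ℝ)) * (subv xnew J₀ ⬝ᵥ u) := by
      rw [hcdef]; unfold denomC; ring
    rw [h3]
  -- residuals at βt
  have hdotβt : ∀ a : Fin p → ℝ, dotp a βt = dotp a βhat + t * dotp a η := by
    intro a
    unfold dotp
    rw [Finset.mul_sum, ← Finset.sum_add_distrib]
    exact Finset.sum_congr rfl fun j _ => by rw [hβteq j]; ring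
  have hrnew : ynew - dotp xnew βt = t / c := by
    rw [hdotβt, hxnewη, hynewdef]
    field_simp
    ring
  -- the dual vector along the path
  have hdual : ∀ j, (∑ i, (y i - dotp (x i) βt) * x i j) + (ynew - dotp xnew βt) * xnew j
      = v j + t * gammaV x J₀ xnew j := by
    intro j
    have h4 : ∀ i, (y i - dotp (x i) βt) * x i j
        = (y i - dotp (x i) βhat) * x i j - t * (dotp (x i) η * x i j) := by
      intro i; rw [hdotβt (x i)]; ring
    rw [Finset.sum_congr rfl fun i _ => h4 i, Finset.sum_sub_distrib, ← Finset.mul_sum, hv j]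
    have h5 : ∑ i, dotp (x i) η * x i j
        = (∑ b : ↥J₀, ((1 / (n : ℝ)) * ∑ i, x i j * x i b.1) * u b) / c := by
      calc ∑ i, dotp (x i) η * x i j
          = ∑ i, ∑ b : ↥J₀, (1/(n:ℝ)) * (x i b.1 * u b) / c * x i j := by
            refine Finset.sum_congr rfl fun i _ => ?_
            rw [hdotη (x i), Finset.mul_sum, Finset.sum_div, Finset.sum_mul]
        _ = ∑ b : ↥J₀, ∑ i, (1/(n:ℝ)) * (x i b.1 * u b) / c * x i j := Finset.sum_comm
        _ = (∑ b : ↥J₀, ((1/(n:ℝ)) * ∑ i, x i j * x i b.1) * u b) / c := by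
            rw [Finset.sum_div]
            refine Finset.sum_congr rfl fun b _ => ?_
            rw [Finset.mul_sum, Finset.sum_mul, Finset.sum_div]
            exact Finset.sum_congr rfl fun i _ => by ring
    rw [h5, hrnew]
    unfold gammaV
    rw [← hu, ← hcdef]
    field_simp
    ring
  -- KKT on the support
  have hK : ∀ j ∈ J₀, v j = lam * Real.sign (βhat j) := fun j hj =>
    lasso_kkt x y lam βhat hmin v hv j ((hJ₀ j).mp hj)
  -- the dual certificate w
  set w : Fin p → ℝ := fun j => v j + t * gammaV x J₀ xnew j with hwdef
  have claim1 : ∀ j, |w j| ≤ lam := by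
    intro j
    by_cases hj : j ∈ J₀
    · have hwj : w j = v j := by rw [hwdef]; simp [hγ0 j hj]
      rw [hwj, hK j hj, abs_mul]
      have hb : βhat j ≠ 0 := (hJ₀ j).mp hj
      have hsone : |Real.sign (βhat j)| = 1 := by
        rcases lt_or_gt_of_ne hb with h | h
        · rw [Real.sign_of_neg h]; norm_num
        · rw [Real.sign_of_pos h]; norm_num
      rw [hsone, abs_of_pos hlam, mul_one]
    · -- off-support case, use the t ≤ t1 bound for the gamma part
      set γ : ℝ := gammaV x J₀ xnew j with hγdef
      have hwj : w j = v j + t * γ := rfl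
      have hvj : |v j| < lam := hstrict j hj
      by_cases hγz : γ = 0
      · rw [hwj, hγz]; simp; linarith [le_of_lt hvj]
      · have htj : (t : EReal) ≤ rpp (Real.sign γ * lam - v j) γ := by
          refine le_trans ht1 (le_trans inf_le_right ?_)
          exact Finset.inf_le (Finset.mem_compl.mpr hj)
        rcases lt_or_gt_of_ne hγz with hneg | hpos
        · -- γ < 0
          have hsγ : Real.sign γ = -1 := Real.sign_of_neg hneg
          have ha : Real.sign γ * lam - v j < 0 := by
            rw [hsγ]; cases abs_lt.mp hvj; linarith
          have hdiv : 0 < (Real.sign γ * lam - v j) / γ := div_pos_of_neg_of_neg ha hneg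
          have hle : t ≤ (Real.sign γ * lam - v j) / γ := rpp_le htj hγz hdiv
          have h6 : Real.sign γ * lam - v j ≤ t * γ := by
            rw [le_div_iff_of_neg hneg] at hle
            exact hle
          rw [hsγ] at h6
          have h7 : t * γ ≤ 0 := mul_nonpos_of_nonneg_of_nonpos ht0 (le_of_lt hneg)
          rw [hwj, abs_le]
          cases abs_lt.mp hvj
          constructor <;> linarith
        · -- γ > 0
          have hsγ : Real.sign γ = 1 := Real.sign_of_pos hpos
          have ha : 0 < Real.sign γ * lam - v j := by
            rw [hsγ]; cases abs_lt.mp hvj; linarith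
          have hdiv : 0 < (Real.sign γ * lam - v j) / γ := div_pos ha hpos
          have hle : t ≤ (Real.sign γ * lam - v j) / γ := rpp_le htj hγz hdiv
          have h6 : t * γ ≤ Real.sign γ * lam - v j := by
            rw [le_div_iff₀ hpos] at hle
            exact hle
          rw [hsγ] at h6
          have h7 : 0 ≤ t * γ := mul_nonneg ht0 (le_of_lt hpos)
          rw [hwj, abs_le]
          cases abs_lt.mp hvj
          constructor <;> linarith
  have claim2 : ∀ j, w j * βt j = lam * |βt j| := by
    intro j
    by_cases hj : j ∈ J₀
    · have hwj : w j = v j := by rw [hwdef]; simp [hγ0 j hj]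
      have hb : βhat j ≠ 0 := (hJ₀ j).mp hj
      set s : ℝ := Real.sign (βhat j) with hsdef
      -- show s * βt j ≥ 0
      have hsb : 0 < s * βhat j := by
        rcases lt_or_gt_of_ne hb with h | h
        · rw [hsdef, Real.sign_of_neg h]; nlinarith
        · rw [hsdef, Real.sign_of_pos h]; nlinarith
      have hsor : s = -1 ∨ s = 1 := by
        rcases lt_or_gt_of_ne hb with h | h
        · left; rw [hsdef, Real.sign_of_neg h]
        · right; rw [hsdef, Real.sign_of_pos h]
      have hsnn : 0 ≤ s * βt j := by
        rw [hβteq j]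
        by_cases hse : 0 ≤ s * η j
        · nlinarith
        · push_neg at hse
          have hη0 : η j ≠ 0 := by
            intro h; rw [h, mul_zero] at hse; exact lt_irrefl 0 hse
          have htj : (t : EReal) ≤ rpp (-(βhat j)) (etaV x J₀ xnew j) := by
            refine le_trans ht1 (le_trans inf_le_left ?_)
            exact Finset.inf_le hj
          rw [← hηdef] at htj
          have hdiv : 0 < -(βhat j) / η j := by
            rcases hsor with hs | hs
            · rw [hs] at hsb hse
              have h8 : βhat j < 0 := by linarith
              have h9 : 0 < η j := by linarith
              exact div_pos (by linarith) h9
            · rw [hs] at hsb hse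
              have h8 : 0 < βhat j := by linarith
              have h9 : η j < 0 := by linarith
              exact div_pos_of_neg_of_neg (by linarith) h9
          have hle : t ≤ -(βhat j) / η j := rpp_le htj hη0 hdiv
          rcases hsor with hs | hs
          · rw [hs] at hsb hse ⊢
            have h9 : 0 < η j := by linarith
            rw [le_div_iff₀ h9] at hle
            nlinarith
          · rw [hs] at hsb hse ⊢
            have h9 : η j < 0 := by linarith
            rw [le_div_iff_of_neg h9] at hle
            nlinarith
      have habs : |βt j| = s * βt j := by
        rcases hsor with hs | hs
        · rw [hs] at hsnn ⊢
          rw [abs_of_nonpos (by linarith)]; ring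
        · rw [hs] at hsnn ⊢
          rw [abs_of_nonneg (by linarith)]; ring
      rw [hwj, hK j hj, habs, ← hsdef]
      ring
    · have hβt0 : βt j = 0 := by
        rw [hβtdef]; unfold betaT; rw [if_neg hj]
      rw [hβt0]; simp
  -- final convexity argument
  have key : ∀ j, lam * |βt j| - w j * βt j ≤ lam * |β j| - w j * β j := by
    intro j
    have h1 : w j * β j ≤ lam * |β j| := by
      calc w j * β j ≤ |w j * β j| := le_abs_self _
        _ = |w j| * |β j| := abs_mul _ _
        _ ≤ lam * |β j| := mul_le_mul_of_nonneg_right (claim1 j) (abs_nonneg _)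
    have h2 := claim2 j
    linarith
  -- expansion identities
  have hsqsum : ∀ (z zt : ℝ), (ynew - z)^2 = (ynew - zt)^2 - 2*(ynew - zt)*(z - zt) + (z - zt)^2 := by
    intro z zt; ring
  have hswap : (∑ i, (y i - dotp (x i) βt) * (dotp (x i) β - dotp (x i) βt))
      + (ynew - dotp xnew βt) * (dotp xnew β - dotp xnew βt)
      = ∑ j, w j * (β j - βt j) := by
    have hdiff : ∀ a : Fin p → ℝ, dotp a β - dotp a βt = ∑ j, a j * (β j - βt j) := by
      intro a
      unfold dotp
      rw [← Finset.sum_sub_distrib]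
      exact Finset.sum_congr rfl fun j _ => by ring
    rw [Finset.sum_congr rfl fun i (_ : i ∈ Finset.univ) => by rw [hdiff (x i), Finset.mul_sum],
      hdiff xnew, Finset.mul_sum, Finset.sum_comm, ← Finset.sum_add_distrib]
    refine Finset.sum_congr rfl fun j _ => ?_
    have hwj : w j = v j + t * gammaV x J₀ xnew j := rfl
    rw [hwj, ← hdual j, add_mul, Finset.sum_mul]
    congr 1
    · exact Finset.sum_congr rfl fun i _ => by ring
    · ring
  -- assemble
  have f5 : ∑ j, (lam * |βt j| - w j * βt j) ≤ ∑ j, (lam * |β j| - w j * β j) :=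
    Finset.sum_le_sum fun j _ => key j
  have f4 : ∑ j, w j * (β j - βt j) = (∑ j, w j * β j) - (∑ j, w j * βt j) := by
    rw [← Finset.sum_sub_distrib]
    exact Finset.sum_congr rfl fun j _ => by ring
  have f6 : ∑ j, (lam * |β j| - w j * β j) = lam * (∑ j, |β j|) - (∑ j, w j * β j) := by
    rw [Finset.sum_sub_distrib, Finset.mul_sum]
  have f7 : ∑ j, (lam * |βt j| - w j * βt j) = lam * (∑ j, |βt j|) - (∑ j, w j * βt j) := by
    rw [Finset.sum_sub_distrib, Finset.mul_sum]
  have f1 : (∑ i, (y i - dotp (x i) β)^2)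
      = (∑ i, (y i - dotp (x i) βt)^2)
        - 2 * (∑ i, (y i - dotp (x i) βt) * (dotp (x i) β - dotp (x i) βt))
        + (∑ i, (dotp (x i) β - dotp (x i) βt)^2) := by
    rw [Finset.sum_congr rfl fun i (_ : i ∈ Finset.univ) => show (y i - dotp (x i) β)^2
      = (y i - dotp (x i) βt)^2
        - 2 * ((y i - dotp (x i) βt) * (dotp (x i) β - dotp (x i) βt))
        + (dotp (x i) β - dotp (x i) βt)^2 by ring]
    rw [Finset.sum_add_distrib, Finset.sum_sub_distrib, ← Finset.mul_sum]
  have f2 : (ynew - dotp xnew β)^2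
      = (ynew - dotp xnew βt)^2
        - 2 * ((ynew - dotp xnew βt) * (dotp xnew β - dotp xnew βt))
        + (dotp xnew β - dotp xnew βt)^2 := by ring
  have f8 : 0 ≤ ∑ i, (dotp (x i) β - dotp (x i) βt)^2 :=
    Finset.sum_nonneg fun i _ => sq_nonneg _
  have f9 : (0:ℝ) ≤ (dotp xnew β - dotp xnew βt)^2 := sq_nonneg _
  show lassoObj x y lam βt + (1/2) * (ynew - dotp xnew βt)^2
      ≤ lassoObj x y lam β + (1/2) * (ynew - dotp xnew β)^2
  unfold lassoObj
  have g1 : lam * (∑ j, |βt j|) - (∑ j, w j * βt j) ≤ lam * (∑ j, |β j|) - (∑ j, w j * β j) := by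
    rw [← f6, ← f7]; exact f5
  have g2 : (∑ i, (y i - dotp (x i) βt) * (dotp (x i) β - dotp (x i) βt))
      + (ynew - dotp xnew βt) * (dotp xnew β - dotp xnew βt)
      = (∑ j, w j * β j) - (∑ j, w j * βt j) := by rw [hswap, f4]
  set A1 : ℝ := ∑ i, (y i - dotp (x i) β)^2 with hA1
  set A2 : ℝ := ∑ i, (y i - dotp (x i) βt)^2 with hA2
  set B : ℝ := ∑ i, (y i - dotp (x i) βt) * (dotp (x i) β - dotp (x i) βt) with hB
  set C : ℝ := ∑ i, (dotp (x i) β - dotp (x i) βt)^2 with hC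
  set L1 : ℝ := ∑ j, |β j| with hL1
  set L2 : ℝ := ∑ j, |βt j| with hL2
  set W1 : ℝ := ∑ j, w j * β j with hW1
  set W2 : ℝ := ∑ j, w j * βt j with hW2
  clear_value A1 A2 B C L1 L2 W1 W2 u c η βt ynew w
  linarith [f1, f2, g1, g2, f8, f9]
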